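/- The function d ↦ 1/√((h_t−h_r)² + d²) − 1/√((h_t+h_r)² + d²) is strictly decreasing in d on (0, ∞), for fixed h_t ≠ h_r, both positive. -/
import Mathlib

lemma key_aux (A B d : ℝ) (hA : 0 < A) (hAB : A < B) :
    1 / Real.sqrt (A + d^2) - 1 / Real.sqrt (B + d^2) =
      (B - A) / (Real.sqrt (A + d^2) * Real.sqrt (B + d^2) *
        (Real.sqrt (A + d^2) + Real.sqrt (B + d^2))) := by
  have hB : 0 < B := lt_trans hA hAB
  have hApos : (0:ℝ) < A + d^2 := by positivity
  have hBpos : (0:ℝ) < B + d^2 := by positivity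
  set s := Real.sqrt (A + d^2) with hs
  set t := Real.sqrt (B + d^2) with htdef
  have hs2 : s^2 = A + d^2 := Real.sq_sqrt hApos.le
  have ht2 : t^2 = B + d^2 := Real.sq_sqrt hBpos.le
  have hspos : 0 < s := Real.sqrt_pos.mpr hApos
  have htpos : 0 < t := Real.sqrt_pos.mpr hBpos
  have hstpos : 0 < s + t := by linarith
  field_simp
  nlinarith [hs2, ht2, mul_pos hspos htpos]

theorem stmt_4 (ht hr : ℝ) (hht : 0 < ht) (hhr : 0 < hr) (hne : ht ≠ hr) :
    StrictAntiOn (fun d : ℝ =>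
      1 / Real.sqrt ((ht - hr)^2 + d^2) - 1 / Real.sqrt ((ht + hr)^2 + d^2))
      (Set.Ioi 0) := by
  intro x hx y hy hxy
  simp only [Set.mem_Ioi] at hx hy
  have hA : 0 < (ht - hr)^2 := by
    have := sub_ne_zero.mpr hne
    positivity
  have hAB : (ht - hr)^2 < (ht + hr)^2 := by nlinarith
  simp only
  rw [key_aux _ _ x hA hAB, key_aux _ _ y hA hAB]
  have hBA : 0 < (ht + hr)^2 - (ht - hr)^2 := by linarith
  apply div_lt_div_of_pos_left hBA
  · have h1 : (0:ℝ) < (ht - hr)^2 + x^2 := by positivity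
    have h2 : (0:ℝ) < (ht + hr)^2 + x^2 := by positivity
    have s1 := Real.sqrt_pos.mpr h1
    have s2 := Real.sqrt_pos.mpr h2
    positivity
  · have hx2 : x^2 < y^2 := by nlinarith
    have l1 : Real.sqrt ((ht - hr)^2 + x^2) < Real.sqrt ((ht - hr)^2 + y^2) := by
      apply Real.sqrt_lt_sqrt (by positivity) (by linarith)
    have l2 : Real.sqrt ((ht + hr)^2 + x^2) < Real.sqrt ((ht + hr)^2 + y^2) := by
      apply Real.sqrt_lt_sqrt (by positivity) (by linarith)
    have s1 := Real.sqrt_pos.mpr (show (0:ℝ) < (ht - hr)^2 + x^2 by positivity)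
    have s2 := Real.sqrt_pos.mpr (show (0:ℝ) < (ht + hr)^2 + x^2 by positivity)
    have s1' := (Real.sqrt_nonneg ((ht - hr)^2 + x^2))
    gcongr
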